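/- A single DCJ operation on a signed genome changes the number of cycles of its breakpoint graph by at most one: |c(BG(G')) − c(BG(G))| ≤ 1 whenever G' is obtained from G by one DCJ. -/

import Mathlib

open Classical

section AddEdge

variable {V : Type*}

/-- Add the edge {a,b} to a simple graph. -/
def addE (H : SimpleGraph V) (a b : V) : SimpleGraph V where
  Adj x y := H.Adj x y ∨ (x ≠ y ∧ s(x, y) = s(a, b))
  symm := by
    constructor
    intro x y hxy
    rcases hxy with h | ⟨hne, he⟩
    · exact Or.inl h.symm
    · exact Or.inr ⟨hne.symm, by rwa [Sym2.eq_swap]⟩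
  loopless := by
    constructor
    intro x hx
    rcases hx with h | ⟨hne, _⟩
    · exact H.loopless.irrefl x h
    · exact hne rfl

@[simp] lemma addE_adj (H : SimpleGraph V) (a b x y : V) :
    (addE H a b).Adj x y ↔ H.Adj x y ∨ (x ≠ y ∧ s(x, y) = s(a, b)) := Iff.rfl

lemma le_addE (H : SimpleGraph V) (a b : V) : H ≤ addE H a b := fun _ _ h => Or.inl h

lemma addE_comm (H : SimpleGraph V) (a b : V) : addE H a b = addE H b a := by
  ext x y
  simp only [addE_adj]
  rw [Sym2.eq_swap (a := a) (b := b)]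

lemma reachable_addE_iff {H : SimpleGraph V} {a b : V} (hab : a ≠ b) (x y : V) :
    (addE H a b).Reachable x y ↔
      H.Reachable x y ∨ (H.Reachable x a ∧ H.Reachable b y) ∨
        (H.Reachable x b ∧ H.Reachable a y) := by
  constructor
  · intro h
    obtain ⟨w⟩ := h
    induction w with
    | nil => exact Or.inl (.refl _)
    | @cons p q r hadj w ih =>
      rcases hadj with ha | ⟨hne, he⟩
      · rcases ih with h1 | ⟨h1, h2⟩ | ⟨h1, h2⟩
        · exact Or.inl (ha.reachable.trans h1)
        · exact Or.inr (Or.inl ⟨ha.reachable.trans h1, h2⟩)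
        · exact Or.inr (Or.inr ⟨ha.reachable.trans h1, h2⟩)
      · rcases Sym2.eq_iff.1 he with ⟨rfl, rfl⟩ | ⟨rfl, rfl⟩
        · rcases ih with h1 | ⟨h1, h2⟩ | ⟨h1, h2⟩
          · exact Or.inr (Or.inl ⟨.refl _, h1⟩)
          · exact Or.inr (Or.inl ⟨.refl _, h2⟩)
          · exact Or.inl h2
        · rcases ih with h1 | ⟨h1, h2⟩ | ⟨h1, h2⟩
          · exact Or.inr (Or.inr ⟨.refl _, h1⟩)
          · exact Or.inl h2
          · exact Or.inr (Or.inr ⟨.refl _, h2⟩)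
  · intro h
    have hR : ∀ {p q : V}, H.Reachable p q → (addE H a b).Reachable p q :=
      fun h' => h'.mono (le_addE H a b)
    have hab' : (addE H a b).Reachable a b :=
      SimpleGraph.Adj.reachable (Or.inr ⟨hab, rfl⟩)
    rcases h with h1 | ⟨h1, h2⟩ | ⟨h1, h2⟩
    · exact hR h1
    · exact ((hR h1).trans hab').trans (hR h2)
    · exact ((hR h1).trans hab'.symm).trans (hR h2)

lemma card_addE_of_reachable {H : SimpleGraph V} {a b : V} (hab : a ≠ b)
    (h : H.Reachable a b) :
    Nat.card (addE H a b).ConnectedComponent = Nat.card H.ConnectedComponent := by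
  have hiff : ∀ x y : V, (addE H a b).Reachable x y ↔ H.Reachable x y := by
    intro x y
    rw [reachable_addE_iff hab]
    constructor
    · rintro (h1 | ⟨h1, h2⟩ | ⟨h1, h2⟩)
      · exact h1
      · exact (h1.trans h).trans h2
      · exact (h1.trans h.symm).trans h2
    · exact Or.inl
  exact Nat.card_congr (Quot.congr (Equiv.refl V) (fun x y => by simpa using hiff x y))

lemma card_addE_of_not_reachable [Finite V] {H : SimpleGraph V} {a b : V}
    (h : ¬ H.Reachable a b) :
    Nat.card H.ConnectedComponent = Nat.card (addE H a b).ConnectedComponent + 1 := by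
  have hab : a ≠ b := by rintro rfl; exact h (.refl _)
  set r : V → H.ConnectedComponent := fun x =>
    if H.Reachable b x then H.connectedComponentMk a else H.connectedComponentMk x with hr
  have hsound : ∀ x y : V, (addE H a b).Reachable x y → r x = r y := by
    intro x y hxy
    rcases (reachable_addE_iff hab x y).1 hxy with h1 | ⟨h1, h2⟩ | ⟨h1, h2⟩
    · by_cases hbx : H.Reachable b x
      · rw [hr]; simp only
        rw [if_pos hbx, if_pos (hbx.trans h1)]
      · rw [hr]; simp only
        rw [if_neg hbx, if_neg (fun hby => hbx (hby.trans h1.symm))]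
        exact SimpleGraph.ConnectedComponent.sound h1
    · have hbx : ¬ H.Reachable b x := fun q => h ((q.trans h1).symm)
      rw [hr]; simp only
      rw [if_neg hbx, if_pos h2]
      exact SimpleGraph.ConnectedComponent.sound h1
    · have hbx : H.Reachable b x := h1.symm
      have hby : ¬ H.Reachable b y := fun q => h (h2.trans q.symm)
      rw [hr]; simp only
      rw [if_pos hbx, if_neg hby]
      exact SimpleGraph.ConnectedComponent.sound h2
  set g : (addE H a b).ConnectedComponent → H.ConnectedComponent := Quot.lift r hsound with hg
  have hg_ne : ∀ C, g C ≠ H.connectedComponentMk b := by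
    intro C
    obtain ⟨x, rfl⟩ := C.exists_rep
    show r x ≠ _
    rw [hr]; simp only
    by_cases hbx : H.Reachable b x
    · rw [if_pos hbx]
      intro q
      exact h (SimpleGraph.ConnectedComponent.exact q)
    · rw [if_neg hbx]
      intro q
      exact hbx (SimpleGraph.ConnectedComponent.exact q).symm
  set f : (addE H a b).ConnectedComponent →
      {C : H.ConnectedComponent // C ≠ H.connectedComponentMk b} :=
    fun C => ⟨g C, hg_ne C⟩ with hf
  have hinj : Function.Injective f := by
    intro C D hCD
    obtain ⟨x, rfl⟩ := C.exists_rep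
    obtain ⟨y, rfl⟩ := D.exists_rep
    have hgv : r x = r y := congrArg Subtype.val hCD
    rw [hr] at hgv; simp only at hgv
    apply Quot.sound
    refine (reachable_addE_iff hab x y).2 ?_
    by_cases hbx : H.Reachable b x <;> by_cases hby : H.Reachable b y
    · exact Or.inl (hbx.symm.trans hby)
    · rw [if_pos hbx, if_neg hby] at hgv
      exact Or.inr (Or.inr ⟨hbx.symm, SimpleGraph.ConnectedComponent.exact hgv⟩)
    · rw [if_neg hbx, if_pos hby] at hgv
      exact Or.inr (Or.inl ⟨SimpleGraph.ConnectedComponent.exact hgv, hby⟩)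
    · rw [if_neg hbx, if_neg hby] at hgv
      exact Or.inl (SimpleGraph.ConnectedComponent.exact hgv)
  have hsurj : Function.Surjective f := by
    rintro ⟨C, hC⟩
    obtain ⟨x, rfl⟩ := C.exists_rep
    have hbx : ¬ H.Reachable b x := fun q => hC (SimpleGraph.ConnectedComponent.sound q.symm)
    refine ⟨Quot.mk _ x, ?_⟩
    apply Subtype.ext
    show r x = _
    rw [hr]; simp only
    rw [if_neg hbx]
    rfl
  have e : (addE H a b).ConnectedComponent ≃
      {C : H.ConnectedComponent // C ≠ H.connectedComponentMk b} :=
    Equiv.ofBijective f ⟨hinj, hsurj⟩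
  calc Nat.card H.ConnectedComponent
      = Nat.card (Option {C : H.ConnectedComponent // C ≠ H.connectedComponentMk b}) :=
        (Nat.card_congr (Equiv.optionSubtypeNe _)).symm
    _ = Nat.card {C : H.ConnectedComponent // C ≠ H.connectedComponentMk b} + 1 :=
        Finite.card_option
    _ = Nat.card (addE H a b).ConnectedComponent + 1 := by rw [Nat.card_congr e]

end AddEdge

lemma key_ineq {V : Type*} [Finite V] (K : SimpleGraph V) {u v w x : V}
    (huv : u ≠ v) (hwx : w ≠ x) (huw : u ≠ w) (hux : u ≠ x) (hvw : v ≠ w) (hvx : v ≠ x) :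
    |(Nat.card (addE (addE K u w) v x).ConnectedComponent : ℤ) -
      (Nat.card (addE (addE K u v) w x).ConnectedComponent : ℤ)| ≤ 1 := by
  have imp1 : K.Reachable u v → ¬K.Reachable u w → (addE K u v).Reachable w x →
      (addE K u w).Reachable v x := by
    intro h1 h3 h2
    rcases (reachable_addE_iff huv w x).1 h2 with hA | ⟨hA, hB⟩ | ⟨hA, hB⟩
    · exact (reachable_addE_iff huw v x).2 (Or.inr (Or.inl ⟨h1.symm, hA⟩))
    · exact absurd hA.symm h3
    · exact absurd ((hA.trans h1.symm)).symm h3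
  have imp2 : ¬K.Reachable u v → K.Reachable u w → (addE K u w).Reachable v x →
      (addE K u v).Reachable w x := by
    intro h1 h3 h4
    rcases (reachable_addE_iff huw v x).1 h4 with hA | ⟨hA, hB⟩ | ⟨hA, hB⟩
    · exact (reachable_addE_iff huv w x).2 (Or.inr (Or.inl ⟨h3.symm, hA⟩))
    · exact absurd hA.symm h1
    · exact absurd ((hA.trans h3.symm)).symm h1
  by_cases h1 : K.Reachable u v <;> by_cases h3 : K.Reachable u w <;>
    by_cases h2 : (addE K u v).Reachable w x <;> by_cases h4 : (addE K u w).Reachable v x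
  all_goals try exact absurd (imp1 h1 h3 h2) h4
  all_goals try exact absurd (imp2 h1 h3 h4) h2
  all_goals first
    | have e1 : Nat.card (addE K u v).ConnectedComponent = Nat.card K.ConnectedComponent :=
        card_addE_of_reachable huv h1
    | have e1 : Nat.card K.ConnectedComponent = Nat.card (addE K u v).ConnectedComponent + 1 :=
        card_addE_of_not_reachable h1
  all_goals first
    | have e2 : Nat.card (addE (addE K u v) w x).ConnectedComponent
          = Nat.card (addE K u v).ConnectedComponent := card_addE_of_reachable hwx h2
    | have e2 : Nat.card (addE K u v).ConnectedComponent
          = Nat.card (addE (addE K u v) w x).ConnectedComponent + 1 :=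
        card_addE_of_not_reachable h2
  all_goals first
    | have e3 : Nat.card (addE K u w).ConnectedComponent = Nat.card K.ConnectedComponent :=
        card_addE_of_reachable huw h3
    | have e3 : Nat.card K.ConnectedComponent = Nat.card (addE K u w).ConnectedComponent + 1 :=
        card_addE_of_not_reachable h3
  all_goals first
    | have e4 : Nat.card (addE (addE K u w) v x).ConnectedComponent
          = Nat.card (addE K u w).ConnectedComponent := card_addE_of_reachable hvx h4
    | have e4 : Nat.card (addE K u w).ConnectedComponent
          = Nat.card (addE (addE K u w) v x).ConnectedComponent + 1 :=
        card_addE_of_not_reachable h4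
  all_goals rw [abs_le]
  all_goals constructor <;> omega


/-- `reachIn R k a b`: `b` is obtained from `a` by exactly `k` steps of `R`. -/
def reachIn {α : Type*} (R : α → α → Prop) : ℕ → α → α → Prop
  | 0, a, b => a = b
  | (k+1), a, b => ∃ c, R a c ∧ reachIn R k c b

/-- A signed genome on {0,…,2n+1} is a perfect matching: every vertex lies on
exactly one edge, no loops. -/
def IsMatching {m : ℕ} (G : Multiset (Sym2 (Fin m))) : Prop :=
  (∀ e ∈ G, ¬ e.IsDiag) ∧ ∀ v : Fin m, (G.filter fun e => v ∈ e).card = 1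

/-- DCJ: replace two matching edges {u,v}, {w,x} by {u,w},{v,x} or {u,x},{v,w}. -/
def SDCJ {m : ℕ} (G G' : Multiset (Sym2 (Fin m))) : Prop :=
  ∃ u v w x : Fin m, s(u, v) ∈ G ∧ s(w, x) ∈ G.erase s(u, v) ∧
    (G' = ((G.erase s(u, v)).erase s(w, x)) + {s(u, w), s(v, x)} ∨
     G' = ((G.erase s(u, v)).erase s(w, x)) + {s(u, x), s(v, w)})

/-- Prefix DCJ on a signed genome: one of the two cut edges contains vertex 0. -/
def PrefixSDCJ {n : ℕ} (G G' : Multiset (Sym2 (Fin (2*n+2)))) : Prop :=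
  ∃ v w x : Fin (2*n+2), s((⟨0, by omega⟩ : Fin (2*n+2)), v) ∈ G ∧
    s(w, x) ∈ G.erase s((⟨0, by omega⟩ : Fin (2*n+2)), v) ∧
    (G' = ((G.erase s((⟨0, by omega⟩ : Fin (2*n+2)), v)).erase s(w, x))
            + {s((⟨0, by omega⟩ : Fin (2*n+2)), w), s(v, x)} ∨
     G' = ((G.erase s((⟨0, by omega⟩ : Fin (2*n+2)), v)).erase s(w, x))
            + {s((⟨0, by omega⟩ : Fin (2*n+2)), x), s(v, w)})

/-- The signed identity genome {{2i,2i+1} : 0 ≤ i ≤ n}. -/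
def idMatch (n : ℕ) : Multiset (Sym2 (Fin (2*n+2))) :=
  (Finset.univ : Finset (Fin (n+1))).val.map fun i =>
    s((⟨2*i.val, by have := i.isLt; omega⟩ : Fin (2*n+2)),
      ⟨2*i.val+1, by have := i.isLt; omega⟩)

/-- The breakpoint graph of a signed genome `G`: black edges are the edges of `G`,
grey edges join 2i and 2i+1. Since it is 2-regular, its alternating cycles are
exactly its connected components. -/
def BGraph {n : ℕ} (G : Multiset (Sym2 (Fin (2*n+2)))) : SimpleGraph (Fin (2*n+2)) where
  Adj x y := x ≠ y ∧ (s(x, y) ∈ G ∨ (x : ℕ) / 2 = (y : ℕ) / 2)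
  symm := by
    constructor
    intro x y h
    refine ⟨h.1.symm, ?_⟩
    rcases h.2 with h2 | h2
    · left; rwa [Sym2.eq_swap]
    · right; omega
  loopless := ⟨fun x h => h.1 rfl⟩

/-- Number of (alternating) cycles of the breakpoint graph of `G`
= number of connected components of `BGraph G`. -/
noncomputable def cBG {n : ℕ} (G : Multiset (Sym2 (Fin (2*n+2)))) : ℕ :=
  Nat.card (BGraph G).ConnectedComponent

/-- Number of trivial (length-1) cycles of the breakpoint graph of `G`:
black edges coinciding with a grey edge {2i, 2i+1}. -/
noncomputable def c1BG {n : ℕ} (G : Multiset (Sym2 (Fin (2*n+2)))) : ℕ :=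
  (G.filter fun e => ∃ x y : Fin (2*n+2),
      e = s(x, y) ∧ x ≠ y ∧ (x : ℕ) / 2 = (y : ℕ) / 2).card

/-- `G` is a signed linear genome: the matching of consecutive pairs of the unsigned
translation of some signed permutation (a sequence starting at 0, ending at 2n+1,
whose inner pairs at positions (2i+1, 2i+2) are of the form {2k−1, 2k}). -/
def IsSignedLinear (n : ℕ) (G : Multiset (Sym2 (Fin (2*n+2)))) : Prop :=
  ∃ l : List (Fin (2*n+2)),
    l.Perm (List.finRange (2*n+2)) ∧
    l.head? = some ⟨0, by omega⟩ ∧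
    l.getLast? = some ⟨2*n+1, by omega⟩ ∧
    (∀ (i : ℕ) (h1 : 2*i+1 < l.length) (h2 : 2*i+2 < l.length),
      ((l.get ⟨2*i+1, h1⟩ : ℕ) + 1) / 2 = ((l.get ⟨2*i+2, h2⟩ : ℕ) + 1) / 2) ∧
    G = ↑((List.range (n+1)).map fun i =>
      s(l.getD (2*i) ⟨0, by omega⟩, l.getD (2*i+1) ⟨0, by omega⟩))

/-- The lower-bound quantity n + 1 + c(BG(G)) − 2c₁(BG(G)) − (0 if {0,1} ∈ G else 2). -/
noncomputable def sLB (n : ℕ) (G : Multiset (Sym2 (Fin (2*n+2)))) : ℤ :=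
  (n : ℤ) + 1 + cBG G - 2 * c1BG G -
    (if s((⟨0, by omega⟩ : Fin (2*n+2)), (⟨1, by omega⟩ : Fin (2*n+2))) ∈ G then 0 else 2)

/-- A single DCJ changes the number of cycles of the breakpoint graph by at most one. -/
@[simp] lemma BGraph_adj {n : ℕ} (G : Multiset (Sym2 (Fin (2*n+2)))) (y z : Fin (2*n+2)) :
    (BGraph G).Adj y z ↔ y ≠ z ∧ (s(y, z) ∈ G ∨ (y : ℕ) / 2 = (z : ℕ) / 2) := Iff.rfl

theorem dcj_changes_cycles_by_at_most_one (n : ℕ)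
    (G G' : Multiset (Sym2 (Fin (2*n+2)))) (hG : IsMatching G) (h : SDCJ G G') :
    |(cBG G' : ℤ) - cBG G| ≤ 1 := by
  obtain ⟨u, v, w, x, h1, h2, hc⟩ := h
  have hwxG : s(w, x) ∈ G := Multiset.mem_of_mem_erase h2
  have huv : u ≠ v := fun e => hG.1 _ h1 (Sym2.mk_isDiag_iff.2 e)
  have hwx : w ≠ x := fun e => hG.1 _ hwxG (Sym2.mk_isDiag_iff.2 e)
  have hdisj : ∀ t : Fin (2*n+2), t ∈ s(u, v) → t ∈ s(w, x) → False := by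
    intro t ht1 ht2
    have hcard := hG.2 t
    have hpos : 0 < (Multiset.filter (fun e => t ∈ e) (G.erase s(u, v))).card := by
      rw [Multiset.card_pos_iff_exists_mem]
      exact ⟨s(w, x), Multiset.mem_filter.2 ⟨h2, ht2⟩⟩
    have hdec : (Multiset.filter (fun e => t ∈ e) G).card
        = (Multiset.filter (fun e => t ∈ e) (G.erase s(u, v))).card + 1 := by
      conv_lhs => rw [← Multiset.cons_erase h1]
      rw [Multiset.filter_cons_of_pos (p := fun e => t ∈ e) _ ht1, Multiset.card_cons]
    omega
  have huw : u ≠ w := by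
    rintro rfl; exact hdisj u (Sym2.mem_mk_left _ _) (Sym2.mem_mk_left _ _)
  have hux : u ≠ x := by
    rintro rfl; exact hdisj u (Sym2.mem_mk_left _ _) (Sym2.mem_mk_right _ _)
  have hvw : v ≠ w := by
    rintro rfl; exact hdisj v (Sym2.mem_mk_right _ _) (Sym2.mem_mk_left _ _)
  have hvx : v ≠ x := by
    rintro rfl; exact hdisj v (Sym2.mem_mk_right _ _) (Sym2.mem_mk_right _ _)
  set E0 := (G.erase s(u, v)).erase s(w, x) with hE0
  have hGmem : ∀ e : Sym2 (Fin (2*n+2)), e ∈ G ↔ e ∈ E0 ∨ e = s(u, v) ∨ e = s(w, x) := by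
    intro e
    have hG2 : s(w, x) ::ₘ E0 = G.erase s(u, v) := Multiset.cons_erase h2
    have hG1 : s(u, v) ::ₘ s(w, x) ::ₘ E0 = G := by rw [hG2]; exact Multiset.cons_erase h1
    rw [← hG1]
    simp only [Multiset.mem_cons]
    tauto
  have hBG : BGraph G = addE (addE (BGraph E0) u v) w x := by
    ext y z
    simp only [BGraph_adj, addE_adj, hGmem]
    tauto
  rcases hc with hc | hc
  · have hBG' : BGraph G' = addE (addE (BGraph E0) u w) v x := by
      ext y z
      have : ∀ e : Sym2 (Fin (2*n+2)), e ∈ G' ↔ e ∈ E0 ∨ e = s(u, w) ∨ e = s(v, x) := by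
        intro e; rw [hc]; simp only [Multiset.mem_add, Multiset.insert_eq_cons, Multiset.mem_cons, Multiset.mem_singleton]
      simp only [BGraph_adj, addE_adj, this]
      tauto
    rw [cBG, cBG, hBG, hBG']
    exact key_ineq (BGraph E0) huv hwx huw hux hvw hvx
  · have hBG' : BGraph G' = addE (addE (BGraph E0) u x) v w := by
      ext y z
      have : ∀ e : Sym2 (Fin (2*n+2)), e ∈ G' ↔ e ∈ E0 ∨ e = s(u, x) ∨ e = s(v, w) := by
        intro e; rw [hc]; simp only [Multiset.mem_add, Multiset.insert_eq_cons, Multiset.mem_cons, Multiset.mem_singleton]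
      simp only [BGraph_adj, addE_adj, this]
      tauto
    rw [cBG, cBG, hBG, hBG']
    rw [show addE (addE (BGraph E0) u v) w x = addE (addE (BGraph E0) u v) x w from
      addE_comm _ _ _]
    exact key_ineq (BGraph E0) huv hwx.symm hux huw hvx hvw
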